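/- arXiv:0706.3937 — 2 statements merged into one kernel-verified Lean document; each statement's English description precedes it below -/
import Mathlib

section
/- If X is a chain connected uniform space and X is uniformly joinable, then X is joinable: any two points of X can be joined by a generalized path. -/
open UniformSpace Filter Function
open scoped Uniformity

universe u v

variable {X : Type u} {Y : Type v}

/-- An `E`-chain: consecutive pairs belong to `E`. -/
def IsEChain (E : Set (X × X)) (l : List X) : Prop :=
  l.Chain' fun a b => (a, b) ∈ E

/-- Homotopy rel endpoints of edge-paths in the Rips complex `R(X,E)`. -/
inductive RipsHtpy (E : Set (X × X)) : List X → List X → Prop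
  | refl (l : List X) : RipsHtpy E l l
  | symm {l₁ l₂ : List X} : RipsHtpy E l₁ l₂ → RipsHtpy E l₂ l₁
  | trans {l₁ l₂ l₃ : List X} : RipsHtpy E l₁ l₂ → RipsHtpy E l₂ l₃ → RipsHtpy E l₁ l₃
  | ins (l₁ l₂ : List X) (a v b : X) :
      (a, v) ∈ E → (v, b) ∈ E → (a, b) ∈ E →
      RipsHtpy E (l₁ ++ a :: b :: l₂) (l₁ ++ a :: v :: b :: l₂)

/-- `E`-homotopy of chains (endpoints may move within `E`). -/
def EHomotopic (E : Set (X × X)) (c d : List X) : Prop :=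
  ∃ xc xd yc yd : X, c.head? = some xc ∧ d.head? = some xd ∧
    c.getLast? = some yc ∧ d.getLast? = some yd ∧
    (xc, xd) ∈ E ∧ (yc, yd) ∈ E ∧
    RipsHtpy E c (xc :: (d ++ [yc]))

/-- The image `f(E)` of a relation under `f`. -/
def fimg (f : X → Y) (E : Set (X × X)) : Set (Y × Y) := Prod.map f f '' E

/-- A generalized (uniform) path from `x` to `y`. -/
structure GenPath (X : Type u) [UniformSpace X] (x y : X) where
  c : Set (X × X) → List X
  chain : ∀ E ∈ 𝓤 X, IsEChain E (c E)
  head : ∀ E ∈ 𝓤 X, (c E).head? = some x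
  last : ∀ E ∈ 𝓤 X, (c E).getLast? = some y
  compat : ∀ E ∈ 𝓤 X, ∀ F ∈ 𝓤 X, F ⊆ E → RipsHtpy E (c F) (c E)

/-- A generalized path is `E`-short if its `E`-term is the edge `e(x,y)`. -/
def GenPath.EShort [UniformSpace X] {x y : X} (p : GenPath X x y) (E : Set (X × X)) : Prop :=
  (x, y) ∈ E ∧ RipsHtpy E (p.c E) [x, y]

/-- `X` is joinable: any two points are joined by a generalized path. -/
def Joinable (X : Type u) [UniformSpace X] : Prop :=
  ∀ x y : X, Nonempty (GenPath X x y)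

/-- `X` is uniformly joinable. -/
def UniformlyJoinable (X : Type u) [UniformSpace X] : Prop :=
  ∀ E ∈ 𝓤 X, ∃ F ∈ 𝓤 X, ∀ x y : X, (x, y) ∈ F → ∃ p : GenPath X x y, p.EShort E

/-- `X` is chain connected. -/
def ChainConnected (X : Type u) [UniformSpace X] : Prop :=
  ∀ E ∈ 𝓤 X, ∀ x y : X, ∃ l : List X,
    IsEChain E l ∧ l.head? = some x ∧ l.getLast? = some y

/-- `f` generates the uniform structure of `Y`. -/
def GeneratesUS [UniformSpace X] [UniformSpace Y] (f : X → Y) : Prop :=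
  (∀ S ∈ 𝓤 Y, ∃ E ∈ 𝓤 X, fimg f E ⊆ S) ∧ ∀ E ∈ 𝓤 X, fimg f E ∈ 𝓤 Y

theorem RipsHtpy.map {E : Set (X × X)} {E' : Set (Y × Y)} (f : X → Y)
    (h : ∀ a b : X, (a, b) ∈ E → (f a, f b) ∈ E') :
    ∀ {l₁ l₂ : List X}, RipsHtpy E l₁ l₂ → RipsHtpy E' (l₁.map f) (l₂.map f) := by
  intro l₁ l₂ H
  induction H with
  | refl l => exact .refl _
  | symm _ ih => exact .symm ih
  | trans _ _ ih₁ ih₂ => exact .trans ih₁ ih₂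
  | ins l₁ l₂ a v b h₁ h₂ h₃ =>
      simpa using RipsHtpy.ins (l₁.map f) (l₂.map f) (f a) (f v) (f b)
        (h a v h₁) (h v b h₂) (h a b h₃)

theorem GeneratesUS.preimage [UniformSpace X] [UniformSpace Y] {f : X → Y}
    (hf : GeneratesUS f) : ∀ S ∈ 𝓤 Y, Prod.map f f ⁻¹' S ∈ 𝓤 X := by
  intro S hS
  obtain ⟨E, hE, hES⟩ := hf.1 S hS
  exact Filter.mem_of_superset hE fun p hp => hES ⟨p, hp, rfl⟩

/-- The pushforward of a generalized path along a map inducing the uniformity. -/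
def GenPath.map [UniformSpace X] [UniformSpace Y] (f : X → Y)
    (hf : ∀ S ∈ 𝓤 Y, Prod.map f f ⁻¹' S ∈ 𝓤 X) {x y : X} (p : GenPath X x y) :
    GenPath Y (f x) (f y) where
  c := fun F => (p.c (Prod.map f f ⁻¹' F)).map f
  chain := fun F hF => List.isChain_map_of_isChain f (fun a b hab => hab) (p.chain _ (hf F hF))
  head := fun F hF => by
    rw [List.head?_map, p.head _ (hf F hF)]; rfl
  last := fun F hF => by
    rw [List.getLast?_map, p.last _ (hf F hF)]; rfl
  compat := fun E hE F hF hFE =>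
    RipsHtpy.map f (fun a b hab => hab)
      (p.compat _ (hf E hE) _ (hf F hF) (Set.preimage_mono hFE))

/-- The space of generalized paths starting at `x₀`. -/
def GPSpace (X : Type u) [UniformSpace X] (x₀ : X) := Σ y : X, GenPath X x₀ y

/-- The endpoint projection. -/
def GPSpace.endpoint [UniformSpace X] {x₀ : X} (c : GPSpace X x₀) : X := c.1

/-- The basic entourage `E*` on `GP(X,x₀)`. -/
def EstarGP [UniformSpace X] (x₀ : X) (E : Set (X × X)) :
    Set (GPSpace X x₀ × GPSpace X x₀) :=
  { q | EHomotopic E (q.1.2.c E) (q.2.2.c E) }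

/-- The induced map on spaces of generalized paths. -/
def gpMap [UniformSpace X] [UniformSpace Y] (f : X → Y)
    (hf : ∀ S ∈ 𝓤 Y, Prod.map f f ⁻¹' S ∈ 𝓤 X) (x₀ : X) :
    GPSpace X x₀ → GPSpace Y (f x₀) :=
  fun c => ⟨f c.1, c.2.map f hf⟩


theorem RipsHtpy.append_right {E : Set (X × X)} {l₁ l₂ : List X} (m : List X)
    (h : RipsHtpy E l₁ l₂) : RipsHtpy E (l₁ ++ m) (l₂ ++ m) := by
  induction h with
  | refl l => exact .refl _
  | symm _ ih => exact .symm ih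
  | trans _ _ ih₁ ih₂ => exact .trans ih₁ ih₂
  | ins la lb a v b h₁ h₂ h₃ =>
      simpa [List.append_assoc] using RipsHtpy.ins la (lb ++ m) a v b h₁ h₂ h₃

theorem RipsHtpy.append_left {E : Set (X × X)} {l₁ l₂ : List X} (m : List X)
    (h : RipsHtpy E l₁ l₂) : RipsHtpy E (m ++ l₁) (m ++ l₂) := by
  induction h with
  | refl l => exact .refl _
  | symm _ ih => exact .symm ih
  | trans _ _ ih₁ ih₂ => exact .trans ih₁ ih₂
  | ins la lb a v b h₁ h₂ h₃ =>
      simpa [List.append_assoc] using RipsHtpy.ins (m ++ la) lb a v b h₁ h₂ h₃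

theorem eq_cons_tail_of_head? {l : List X} {a : X} (h : l.head? = some a) :
    l = a :: l.tail := by
  cases l with
  | nil => simp at h
  | cons b t => simp at h; simp [h]

theorem eq_dropLast_append_of_getLast? {l : List X} {a : X} (h : l.getLast? = some a) :
    l = l.dropLast ++ [a] := by
  have h0 : l ≠ [] := by rintro rfl; simp at h
  rw [List.getLast?_eq_getLast h0, Option.some_inj] at h
  rw [← h, List.dropLast_append_getLast h0]

theorem isEChain_trans_aux {E : Set (X × X)} {y : X} {l₁ l₂ : List X}
    (h₁ : IsEChain E l₁) (h₂ : IsEChain E l₂)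
    (hl : l₁.getLast? = some y) (hh : l₂.head? = some y) :
    IsEChain E (l₁ ++ l₂.tail) := by
  apply List.IsChain.append h₁ (List.IsChain.tail h₂)
  intro a ha b hb
  rw [hl] at ha
  obtain rfl : y = a := by simpa using ha
  rw [eq_cons_tail_of_head? hh] at h₂
  cases ht : l₂.tail with
  | nil => rw [ht] at hb; simp at hb
  | cons c t =>
      rw [ht] at hb h₂
      obtain rfl : c = b := by simpa using hb
      exact (List.isChain_cons_cons.mp h₂).1

/-- Concatenation of generalized paths. -/
def GenPath.concat [UniformSpace X] {x y z : X} (p : GenPath X x y) (q : GenPath X y z) :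
    GenPath X x z where
  c := fun E => p.c E ++ (q.c E).tail
  chain := fun E hE =>
    isEChain_trans_aux (p.chain E hE) (q.chain E hE) (p.last E hE) (q.head E hE)
  head := fun E hE => by
    show (p.c E ++ (q.c E).tail).head? = some x
    rw [eq_cons_tail_of_head? (p.head E hE)]
    simp [List.head?_cons]
  last := fun E hE => by
    show (p.c E ++ (q.c E).tail).getLast? = some z
    cases ht : (q.c E).tail with
    | nil =>
        have hq := eq_cons_tail_of_head? (q.head E hE)
        rw [ht] at hq
        have h2 : (q.c E).getLast? = some y := by rw [hq]; rfl
        rw [q.last E hE] at h2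
        obtain rfl : z = y := by simpa using h2
        rw [List.append_nil]
        exact p.last E hE
    | cons c t =>
        have hq := eq_cons_tail_of_head? (q.head E hE)
        have h2 : (q.c E).getLast? = (c :: t).getLast? := by
          conv_lhs => rw [hq, ht, List.getLast?_cons_cons]
        rw [q.last E hE] at h2
        rw [List.getLast?_append_of_ne_nil _ (List.cons_ne_nil c t), ← h2]
  compat := fun E hE F hF hFE => by
    have h1 : RipsHtpy E (p.c F ++ (q.c F).tail) (p.c E ++ (q.c F).tail) :=
      (p.compat E hE F hF hFE).append_right _
    have hpe : p.c E = (p.c E).dropLast ++ [y] :=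
      eq_dropLast_append_of_getLast? (p.last E hE)
    have key : ∀ G, (𝓤 X).sets G →
        p.c E ++ (q.c G).tail = (p.c E).dropLast ++ q.c G := by
      intro G hG
      conv_lhs => rw [hpe]
      rw [List.append_assoc, List.singleton_append, ← eq_cons_tail_of_head? (q.head G hG)]
    have h2 : RipsHtpy E (p.c E ++ (q.c F).tail) (p.c E ++ (q.c E).tail) := by
      rw [key F hF, key E hE]
      exact (q.compat E hE F hF hFE).append_left _
    exact h1.trans h2

/-- The constant generalized path. -/
def GenPath.refl [UniformSpace X] (x : X) : GenPath X x x where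
  c := fun _ => [x]
  chain := fun _ _ => List.isChain_singleton x
  head := fun _ _ => rfl
  last := fun _ _ => rfl
  compat := fun _ _ _ _ _ => .refl _

/-- A chain connected, uniformly joinable uniform space is joinable. -/
theorem joinable_of_chainConnected_uniformlyJoinable [UniformSpace X]
    (hcc : ChainConnected X) (huj : UniformlyJoinable X) : Joinable X := by
  obtain ⟨F, hF, hjoin⟩ := huj Set.univ Filter.univ_mem
  have key : ∀ (l : List X) (x y : X), IsEChain F l → l.head? = some x →
      l.getLast? = some y → Nonempty (GenPath X x y) := by
    intro l
    induction l with
    | nil => intro x y _ h; simp at h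
    | cons a t ih =>
        intro x y hch hh hl
        have hax : a = x := by simpa using hh
        subst hax
        cases t with
        | nil =>
            have hay : a = y := by simpa using hl
            subst hay
            exact ⟨GenPath.refl a⟩
        | cons b t' =>
            have hab : (a, b) ∈ F := (List.isChain_cons_cons.mp hch).1
            obtain ⟨p, _⟩ := hjoin a b hab
            obtain ⟨q⟩ := ih b y (List.isChain_cons_cons.mp hch).2 rfl
              (by rw [← hl, List.getLast?_cons_cons])
            exact ⟨p.concat q⟩
  intro x y
  obtain ⟨l, hch, hh, hl⟩ := hcc F hF x y
  exact key l x y hch hh hl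
end

section
/- If f : X₁ → X₂ and g : X₂ → X₃ are generalized uniform covering maps (each generating the uniform structure of its range), then the composition g∘f : X₁ → X₃ is a generalized uniform covering map. -/
open UniformSpace Filter Function
open scoped Uniformity

universe u v

variable {X : Type u} {Y : Type v}

/-- A generalized uniform covering map: it generates the uniform structure of the
range and satisfies GP1, GP2, C1 and C2. -/
def IsGUCM [UniformSpace X] [UniformSpace Y] (f : X → Y) : Prop :=
  ∃ hgen : GeneratesUS f,
    -- GP1: generalized path lifting
    (∀ x₀ : X, ∀ d : GPSpace Y (f x₀), ∃ c : GPSpace X x₀,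
      gpMap f hgen.preimage x₀ c = d) ∧
    -- GP2: approximate uniqueness of generalized path lifts
    (∀ E ∈ 𝓤 X, ∃ F ∈ 𝓤 X, ∀ (x y z : X) (c : GenPath X x y) (d : GenPath X x z),
      EHomotopic (fimg f F) ((c.map f hgen.preimage).c (fimg f F))
        ((d.map f hgen.preimage).c (fimg f F)) →
      EHomotopic E (c.c E) (d.c E)) ∧
    -- C1: chain lifting
    (∀ E ∈ 𝓤 X, ∃ F ∈ 𝓤 X, ∀ x : X, ∀ l : List Y,
      IsEChain (fimg f F) l → l.head? = some (f x) →
      ∃ l' : List X, IsEChain E l' ∧ l'.head? = some x ∧ l'.map f = l) ∧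
    -- C2: approximate uniqueness of chain lifts
    (∀ E ∈ 𝓤 X, ∃ F ∈ 𝓤 X, ∀ α β : List X,
      IsEChain F α → IsEChain F β → α.head? = β.head? →
      EHomotopic (fimg f F) (α.map f) (β.map f) → EHomotopic E α β)

theorem RipsHtpy.mono {E E' : Set (X × X)} (h : E ⊆ E') :
    ∀ {l₁ l₂ : List X}, RipsHtpy E l₁ l₂ → RipsHtpy E' l₁ l₂ := by
  intro l₁ l₂ H
  induction H with
  | refl l => exact .refl _
  | symm _ ih => exact .symm ih
  | trans _ _ ih₁ ih₂ => exact .trans ih₁ ih₂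
  | ins l₁ l₂ a v b h₁ h₂ h₃ => exact .ins l₁ l₂ a v b (h h₁) (h h₂) (h h₃)

theorem RipsHtpy.head_eq {E : Set (X × X)} {l₁ l₂ : List X} (H : RipsHtpy E l₁ l₂) :
    l₁.head? = l₂.head? := by
  induction H with
  | refl l => rfl
  | symm _ ih => exact ih.symm
  | trans _ _ ih₁ ih₂ => exact ih₁.trans ih₂
  | ins l₁ l₂ a v b _ _ _ => cases l₁ <;> simp

theorem RipsHtpy.last_eq {E : Set (X × X)} {l₁ l₂ : List X} (H : RipsHtpy E l₁ l₂) :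
    l₁.getLast? = l₂.getLast? := by
  induction H with
  | refl l => rfl
  | symm _ ih => exact ih.symm
  | trans _ _ ih₁ ih₂ => exact ih₁.trans ih₂
  | ins l₁ l₂ a v b _ _ _ =>
      rcases List.eq_nil_or_concat l₂ with rfl | ⟨l', e, rfl⟩ <;>
        simp [List.getLast?_append]

theorem RipsHtpy.append_congr {E : Set (X × X)} (p s : List X) {l₁ l₂ : List X}
    (H : RipsHtpy E l₁ l₂) : RipsHtpy E (p ++ l₁ ++ s) (p ++ l₂ ++ s) := by
  induction H with
  | refl l => exact .refl _
  | symm _ ih => exact .symm ih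
  | trans _ _ ih₁ ih₂ => exact .trans ih₁ ih₂
  | ins l₁ l₂ a v b h₁ h₂ h₃ =>
      have := RipsHtpy.ins (p ++ l₁) (l₂ ++ s) a v b h₁ h₂ h₃
      simpa [List.append_assoc] using this

theorem EHomotopic.transport {E E' : Set (X × X)} (hEE' : E ⊆ E')
    {α β α' β' : List X} (h : EHomotopic E α β)
    (hα : RipsHtpy E' α α') (hβ : RipsHtpy E' β β') : EHomotopic E' α' β' := by
  obtain ⟨xa, xb, ya, yb, ha1, hb1, ha2, hb2, hx, hy, hr⟩ := h
  refine ⟨xa, xb, ya, yb, ?_, ?_, ?_, ?_, hEE' hx, hEE' hy, ?_⟩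
  · rw [← hα.head_eq]; exact ha1
  · rw [← hβ.head_eq]; exact hb1
  · rw [← hα.last_eq]; exact ha2
  · rw [← hβ.last_eq]; exact hb2
  · refine (hα.symm.trans (hr.mono hEE')).trans ?_
    have := (hβ.append_congr [xa] [ya])
    simpa using this

theorem EHomotopic.mono {E E' : Set (X × X)} (hEE' : E ⊆ E') {α β : List X}
    (h : EHomotopic E α β) : EHomotopic E' α β :=
  h.transport hEE' (.refl _) (.refl _)

theorem IsEChain.mono {E E' : Set (X × X)} (h : E ⊆ E') {l : List X}
    (hl : IsEChain E l) : IsEChain E' l :=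
  List.IsChain.imp (fun _ _ hab => h hab) hl

theorem fimg_comp {Z : Type*} (f : X → Y) (g : Y → Z) (E : Set (X × X)) :
    fimg (g ∘ f) E = fimg g (fimg f E) := by
  simp only [fimg, Set.image_image]
  rfl

theorem fimg_mono (f : X → Y) {E E' : Set (X × X)} (h : E ⊆ E') :
    fimg f E ⊆ fimg f E' := Set.image_mono h

theorem fimg_subset_of_preimage (f : X → Y) {E : Set (X × X)} {G : Set (Y × Y)}
    (h : E ⊆ Prod.map f f ⁻¹' G) : fimg f E ⊆ G := by
  rintro _ ⟨p, hp, rfl⟩; exact h hp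

theorem GenPath.ext' [UniformSpace X] {x y : X} {p q : GenPath X x y}
    (h : p.c = q.c) : p = q := by
  cases p; cases q; cases h; rfl

theorem GenPath.map_map {Z : Type*} [UniformSpace X] [UniformSpace Y] [UniformSpace Z]
    (f : X → Y) (g : Y → Z)
    (hf : ∀ S ∈ 𝓤 Y, Prod.map f f ⁻¹' S ∈ 𝓤 X)
    (hg : ∀ S ∈ 𝓤 Z, Prod.map g g ⁻¹' S ∈ 𝓤 Y)
    (hgf : ∀ S ∈ 𝓤 Z, Prod.map (g ∘ f) (g ∘ f) ⁻¹' S ∈ 𝓤 X)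
    {x y : X} (p : GenPath X x y) :
    ((p.map f hf).map g hg) = (p.map (g ∘ f) hgf : GenPath Z (g (f x)) (g (f y))) := by
  refine GenPath.ext' ?_
  funext F
  show ((p.c _).map f).map g = (p.c _).map (g ∘ f)
  rw [List.map_map]
  rfl

theorem gpMap_comp {X₁ X₂ X₃ : Type*}
    [UniformSpace X₁] [UniformSpace X₂] [UniformSpace X₃]
    (f : X₁ → X₂) (g : X₂ → X₃)
    (hf : ∀ S ∈ 𝓤 X₂, Prod.map f f ⁻¹' S ∈ 𝓤 X₁)
    (hg : ∀ S ∈ 𝓤 X₃, Prod.map g g ⁻¹' S ∈ 𝓤 X₂)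
    (hgf : ∀ S ∈ 𝓤 X₃, Prod.map (g ∘ f) (g ∘ f) ⁻¹' S ∈ 𝓤 X₁)
    (x₀ : X₁) (c : GPSpace X₁ x₀) :
    gpMap (g ∘ f) hgf x₀ c = gpMap g hg (f x₀) (gpMap f hf x₀ c) := by
  show (⟨g (f c.1), c.2.map (g ∘ f) hgf⟩ : GPSpace X₃ (g (f x₀)))
      = ⟨g (f c.1), (c.2.map f hf).map g hg⟩
  rw [GenPath.map_map f g hf hg hgf c.2]

/-- The composition of two generalized uniform covering maps is a generalized uniform
covering map. -/
theorem isGUCM_comp {X₁ X₂ X₃ : Type*}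
    [UniformSpace X₁] [UniformSpace X₂] [UniformSpace X₃]
    (f : X₁ → X₂) (g : X₂ → X₃) (hf : IsGUCM f) (hg : IsGUCM g) :
    IsGUCM (g ∘ f) := by
  obtain ⟨hfg, hfGP1, hfGP2, hfC1, hfC2⟩ := hf
  obtain ⟨hgg, hgGP1, hgGP2, hgC1, hgC2⟩ := hg
  have hgen : GeneratesUS (g ∘ f) := by
    constructor
    · intro S hS
      obtain ⟨F₂, hF₂, h2⟩ := hgg.1 S hS
      obtain ⟨F₁, hF₁, h1⟩ := hfg.1 F₂ hF₂
      exact ⟨F₁, hF₁, by rw [fimg_comp]; exact (fimg_mono g h1).trans h2⟩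
    · intro E hE
      rw [fimg_comp]
      exact hgg.2 _ (hfg.2 E hE)
  refine ⟨hgen, ?_, ?_, ?_, ?_⟩
  · -- GP1
    intro x₀ d
    obtain ⟨c₂, hc₂⟩ := hgGP1 (f x₀) d
    obtain ⟨c₁, hc₁⟩ := hfGP1 x₀ c₂
    refine ⟨c₁, ?_⟩
    refine (gpMap_comp f g hfg.preimage hgg.preimage hgen.preimage x₀ c₁).trans ?_
    rw [hc₁]; exact hc₂
  · -- GP2
    intro E hE
    obtain ⟨F₁, hF₁, H1⟩ := hfGP2 E hE
    obtain ⟨F₂, hF₂, H2⟩ := hgGP2 (fimg f F₁) (hfg.2 _ hF₁)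
    refine ⟨Prod.map f f ⁻¹' F₂, hfg.preimage _ hF₂, ?_⟩
    intro x y z c d hcd
    set S := fimg (g ∘ f) (Prod.map f f ⁻¹' F₂) with hSdef
    set S' := fimg g F₂ with hS'def
    have hSS' : S ⊆ S' := by
      rw [hSdef, fimg_comp]
      exact fimg_mono g (fimg_subset_of_preimage f subset_rfl)
    have hS : S ∈ 𝓤 X₃ := hgen.2 _ (hfg.preimage _ hF₂)
    have hS' : S' ∈ 𝓤 X₃ := hgg.2 _ hF₂
    rw [← GenPath.map_map f g hfg.preimage hgg.preimage hgen.preimage c,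
        ← GenPath.map_map f g hfg.preimage hgg.preimage hgen.preimage d] at hcd
    have hcd' :
        EHomotopic S' (((c.map f hfg.preimage).map g hgg.preimage).c S')
          (((d.map f hfg.preimage).map g hgg.preimage).c S') :=
      hcd.transport hSS'
        (((c.map f hfg.preimage).map g hgg.preimage).compat S' hS' S hS hSS')
        (((d.map f hfg.preimage).map g hgg.preimage).compat S' hS' S hS hSS')
    exact H1 x y z c d
      (H2 (f x) (f y) (f z) (c.map f hfg.preimage) (d.map f hfg.preimage) hcd')
  · -- C1
    intro E hE
    obtain ⟨F, hF, H1⟩ := hfC1 E hE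
    obtain ⟨G, hG, H2⟩ := hgC1 (fimg f F) (hfg.2 _ hF)
    refine ⟨Prod.map f f ⁻¹' G, hfg.preimage _ hG, ?_⟩
    intro x l hl hhead
    have hl' : IsEChain (fimg g G) l := by
      refine hl.mono ?_
      rw [fimg_comp]
      exact fimg_mono g (fimg_subset_of_preimage f subset_rfl)
    obtain ⟨l₂, hl₂c, hl₂h, hl₂m⟩ := H2 (f x) l hl' hhead
    obtain ⟨l₁, hl₁c, hl₁h, hl₁m⟩ := H1 x l₂ hl₂c hl₂h
    exact ⟨l₁, hl₁c, hl₁h, by rw [← List.map_map, hl₁m, hl₂m]⟩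
  · -- C2
    intro E hE
    obtain ⟨F, hF, H1⟩ := hfC2 E hE
    obtain ⟨G, hG, H2⟩ := hgC2 (fimg f F) (hfg.2 _ hF)
    refine ⟨F ∩ Prod.map f f ⁻¹' G, Filter.inter_mem hF (hfg.preimage _ hG), ?_⟩
    intro α β hα hβ hhead h
    have hsub : fimg (g ∘ f) (F ∩ Prod.map f f ⁻¹' G) ⊆ fimg g G := by
      rw [fimg_comp]
      exact fimg_mono g (fimg_subset_of_preimage f Set.inter_subset_right)
    have hαG : IsEChain G (α.map f) :=
      List.isChain_map_of_isChain f (fun _ _ hab => hab.2) hα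
    have hβG : IsEChain G (β.map f) :=
      List.isChain_map_of_isChain f (fun _ _ hab => hab.2) hβ
    have hheadG : (α.map f).head? = (β.map f).head? := by
      simp [List.head?_map, hhead]
    have h' : EHomotopic (fimg g G) ((α.map f).map g) ((β.map f).map g) := by
      rw [List.map_map, List.map_map]
      exact h.mono hsub
    exact H1 α β (hα.mono Set.inter_subset_left) (hβ.mono Set.inter_subset_left) hhead
      (H2 (α.map f) (β.map f) hαG hβG hheadG h')
end
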